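/- Let A be a finite nonempty alphabet. If L is a regular language over A that belongs to the Boolean subalgebra of sets of words generated by the languages that are Π₁_d[N]-definable for some d ≥ 1 (i.e., L is obtained from such languages by finitely many unions, intersections, and complements), then L belongs to the Boolean subalgebra generated by the languages that are Π₁_d[Reg]-definable for some d ≥ 1. -/

import Mathlib

set_option linter.unusedSectionVars false
set_option maxHeartbeats 1000000


def NumPredEncoding {d : ℕ} (N : (Fin d → ℕ) → ℕ → Prop) :
    Language (Finset (Fin d)) :=
  {u | ∃ p : Fin d → Fin u.length,
    (∀ j : Fin d, ∀ q : Fin u.length, j ∈ u.get q ↔ q = p j) ∧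
    N (fun j => (p j : ℕ)) u.length}

def IsRegularNumPred {d : ℕ} (N : (Fin d → ℕ) → ℕ → Prop) : Prop :=
  (NumPredEncoding N).IsRegular

def Pi1NDefinable (A : Type*) (d : ℕ) (L : Set (List A)) : Prop :=
  ∃ N : (Fin d → A) → (Fin d → ℕ) → ℕ → Prop,
    ∀ w : List A, w ∈ L ↔ ∀ i : Fin d → Fin w.length,
      N (fun j => w.get (i j)) (fun j => (i j : ℕ)) w.length

def Pi1RegDefinable (A : Type*) (d : ℕ) (L : Set (List A)) : Prop :=
  ∃ N : (Fin d → A) → (Fin d → ℕ) → ℕ → Prop,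
    (∀ a : Fin d → A, IsRegularNumPred (N a)) ∧
    ∀ w : List A, w ∈ L ↔ ∀ i : Fin d → Fin w.length,
      N (fun j => w.get (i j)) (fun j => (i j : ℕ)) w.length

inductive BoolComb {α : Type*} (G : Set α → Prop) : Set α → Prop
  | base (s : Set α) : G s → BoolComb G s
  | compl (s : Set α) : BoolComb G s → BoolComb G sᶜ
  | union (s t : Set α) : BoolComb G s → BoolComb G t → BoolComb G (s ∪ t)
  | inter (s t : Set α) : BoolComb G s → BoolComb G t → BoolComb G (s ∩ t)

open Classical


variable {α : Type*} {β : Type*}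

theorem isRegular_compl {L : Language α} (h : L.IsRegular) : Language.IsRegular (Lᶜ) := by
  obtain ⟨σ, fσ, M, hM⟩ := h
  refine ⟨σ, fσ, ⟨M.step, M.start, M.acceptᶜ⟩, ?_⟩
  ext x
  have : (⟨M.step, M.start, M.acceptᶜ⟩ : DFA α σ).evalFrom M.start x = M.evalFrom M.start x := rfl
  simp only [DFA.accepts, DFA.acceptsFrom, Set.mem_setOf_eq, DFA.eval, this, ← hM]
  rfl

theorem isRegular_inter {L L' : Language α} (h : L.IsRegular) (h' : L'.IsRegular) :
    Language.IsRegular ((L ∩ L' : Set (List α))) := by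
  obtain ⟨σ, fσ, M, hM⟩ := h
  obtain ⟨σ', fσ', M', hM'⟩ := h'
  refine ⟨σ × σ', inferInstance,
    ⟨fun s a => (M.step s.1 a, M'.step s.2 a), (M.start, M'.start),
      {s | s.1 ∈ M.accept ∧ s.2 ∈ M'.accept}⟩, ?_⟩
  have key : ∀ (x : List α) (s : σ) (s' : σ'),
      (⟨fun s a => (M.step s.1 a, M'.step s.2 a), (M.start, M'.start),
        {s | s.1 ∈ M.accept ∧ s.2 ∈ M'.accept}⟩ : DFA α (σ × σ')).evalFrom (s, s') x
        = (M.evalFrom s x, M'.evalFrom s' x) := by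
    intro x
    induction x with
    | nil => intro s s'; rfl
    | cons a x ih => intro s s'; exact ih (M.step s a) (M'.step s' a)
  ext x
  simp only [DFA.accepts, DFA.acceptsFrom, Set.mem_setOf_eq, DFA.eval, key, ← hM, ← hM']
  rfl

theorem isRegular_union {L L' : Language α} (h : L.IsRegular) (h' : L'.IsRegular) :
    Language.IsRegular ((L ∪ L' : Set (List α))) := by
  have : (L ∪ L' : Set (List α)) = ((Lᶜ ∩ L'ᶜ : Set (List α))ᶜ : Set (List α)) := by
    ext x; show x ∈ L ∨ x ∈ L' ↔ ¬(¬ x ∈ L ∧ ¬ x ∈ L'); tauto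
  rw [this]
  exact isRegular_compl (isRegular_inter (isRegular_compl h) (isRegular_compl h'))

theorem isRegular_preimage {L : Language β} (f : α → β) (h : L.IsRegular) :
    Language.IsRegular (List.map f ⁻¹' L : Language α) := by
  obtain ⟨σ, fσ, M, hM⟩ := h
  exact ⟨σ, fσ, M.comap f, by rw [DFA.accepts_comap, hM]⟩

theorem isRegular_image {L : Language α} (f : α → β) (h : L.IsRegular) :
    Language.IsRegular ({y | ∃ x ∈ L, List.map f x = y} : Language β) := by
  obtain ⟨σ, fσ, M, hM⟩ := h
  classical
  let N : NFA β σ := ⟨fun s b => {t | ∃ a, f a = b ∧ t = M.step s a}, {M.start}, M.accept⟩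
  have key : ∀ (y : List β) (s : σ),
      N.evalFrom {s} y = {t | ∃ x : List α, List.map f x = y ∧ t = M.evalFrom s x} := by
    intro y
    induction y using List.reverseRecOn with
    | nil =>
      intro s; ext t
      simp only [NFA.evalFrom_nil, Set.mem_singleton_iff, Set.mem_setOf_eq]
      constructor
      · rintro rfl; exact ⟨[], rfl, rfl⟩
      · rintro ⟨x, hx, rfl⟩
        rw [List.map_eq_nil_iff] at hx
        subst hx; rfl
    | append_singleton y b ih =>
      intro s; ext t
      simp only [NFA.evalFrom_append, NFA.evalFrom_singleton, NFA.stepSet, ih, Set.mem_iUnion,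
        Set.mem_setOf_eq]
      constructor
      · rintro ⟨u, ⟨x, hx, rfl⟩, a, ha, rfl⟩
        exact ⟨x ++ [a], by simp [hx, ha], by simp [DFA.evalFrom_append_singleton]⟩
      · rintro ⟨x, hx, rfl⟩
        rcases List.eq_nil_or_concat x with rfl | ⟨x', a, rfl⟩
        · simp at hx
        · rw [List.concat_eq_append] at hx ⊢
          rw [List.map_append] at hx
          simp only [List.map_cons, List.map_nil] at hx
          have h1 : List.map f x' = y := by
            have := congrArg (fun l => List.dropLast l) hx
            simpa using this
          have h2 : f a = b := by
            have := congrArg (fun l => List.getLast? l) hx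
            simp at this
            exact this
          exact ⟨M.evalFrom s x', ⟨x', h1, rfl⟩, a, h2, by simp [DFA.evalFrom_append_singleton]⟩
  refine ⟨Set σ, inferInstance, N.toDFA, ?_⟩
  rw [NFA.toDFA_correct]
  ext y
  simp only [NFA.mem_accepts, NFA.evalFrom, Set.mem_setOf_eq]
  show (∃ S ∈ N.accept, S ∈ N.evalFrom N.start y) ↔ _
  have : N.start = {M.start} := rfl
  rw [this, key]
  constructor
  · rintro ⟨t, ht, x, hx, rfl⟩
    exact ⟨x, by rw [← hM]; exact ht, hx⟩
  · rintro ⟨x, hx, hfx⟩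
    exact ⟨M.evalFrom M.start x, by rw [← hM] at hx; exact hx, x, hfx, rfl⟩


variable {γ : Type*}

def allLang (Q : γ → Prop) : Language γ := {z | ∀ c ∈ z, Q c}

theorem isRegular_allLang (Q : γ → Prop) : (allLang Q).IsRegular := by
  classical
  let M : DFA γ Bool := ⟨fun b c => b && decide (Q c), true, {true}⟩
  have key : ∀ (z : List γ) (b : Bool), M.evalFrom b z = true ↔ (b = true ∧ ∀ c ∈ z, Q c) := by
    intro z
    induction z with
    | nil => intro b; simp [DFA.evalFrom_nil]
    | cons c z ih =>
      intro b
      have : M.evalFrom b (c :: z) = M.evalFrom (b && decide (Q c)) z := rfl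
      rw [this, ih]
      simp only [Bool.and_eq_true, decide_eq_true_eq, List.mem_cons]
      constructor
      · rintro ⟨⟨hb, hc⟩, hz⟩
        exact ⟨hb, fun x hx => hx.elim (fun h => h ▸ hc) (hz x)⟩
      · rintro ⟨hb, hall⟩
        exact ⟨⟨hb, hall c (Or.inl rfl)⟩, fun x hx => hall x (Or.inr hx)⟩
  refine ⟨Bool, inferInstance, M, ?_⟩
  ext z
  show M.evalFrom true z ∈ M.accept ↔ _
  have : M.evalFrom true z ∈ M.accept ↔ M.evalFrom true z = true := Iff.rfl
  rw [this, key]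
  simp only [true_and]
  exact Iff.rfl

variable {d : ℕ}

/-- The exact-marking condition from `NumPredEncoding`. -/
def Marking (u : List (Finset (Fin d))) (p : Fin d → Fin u.length) : Prop :=
  ∀ (j : Fin d) (q : Fin u.length), j ∈ u.get q ↔ q = p j

theorem marking_unique {u : List (Finset (Fin d))} {p p' : Fin d → Fin u.length}
    (h : Marking u p) (h' : Marking u p') : p = p' := by
  funext j
  have : j ∈ u.get (p' j) := (h' j (p' j)).mpr rfl
  exact ((h j (p' j)).mp this).symm

def markDFA (d : ℕ) : DFA (Finset (Fin d)) (Option (Finset (Fin d))) :=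
  ⟨fun o s => o.bind fun m => if Disjoint m s then some (m ∪ s) else none,
   some ∅, {some Finset.univ}⟩

theorem markDFA_none (z : List (Finset (Fin d))) : (markDFA d).evalFrom none z = none := by
  induction z with
  | nil => rfl
  | cons s z ih => exact ih

theorem foldl_union_mem (z : List (Finset (Fin d))) (m : Finset (Fin d)) (j : Fin d) :
    j ∈ z.foldl (· ∪ ·) m ↔ j ∈ m ∨ ∃ s ∈ z, j ∈ s := by
  induction z generalizing m with
  | nil => simp
  | cons s z ih =>
    simp only [List.foldl_cons, ih, Finset.mem_union, List.mem_cons]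
    constructor
    · rintro (h | ⟨s', hs', hj⟩)
      · rcases h with h | h
        · exact Or.inl h
        · exact Or.inr ⟨s, Or.inl rfl, h⟩
      · exact Or.inr ⟨s', Or.inr hs', hj⟩
    · rintro (h | ⟨s', hs' | hs', hj⟩)
      · exact Or.inl (Or.inl h)
      · exact Or.inl (Or.inr (hs' ▸ hj))
      · exact Or.inr ⟨s', hs', hj⟩

theorem markDFA_some (z : List (Finset (Fin d))) (m m' : Finset (Fin d)) :
    (markDFA d).evalFrom (some m) z = some m' ↔
      (List.Pairwise (fun s t => Disjoint s t) z ∧ (∀ s ∈ z, Disjoint m s) ∧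
        m' = z.foldl (· ∪ ·) m) := by
  induction z generalizing m with
  | nil => simp [DFA.evalFrom_nil, eq_comm]
  | cons s z ih =>
    have hstep : (markDFA d).evalFrom (some m) (s :: z)
        = (markDFA d).evalFrom ((markDFA d).step (some m) s) z := rfl
    by_cases hd : Disjoint m s
    · have : (markDFA d).step (some m) s = some (m ∪ s) := by
        simp [markDFA, hd]
      rw [hstep, this, ih]
      simp only [List.pairwise_cons, List.mem_cons, List.foldl_cons]
      constructor
      · rintro ⟨hp, hdis, hm⟩
        refine ⟨⟨fun t ht => ?_, hp⟩, fun t ht => ?_, hm⟩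
        · exact Finset.disjoint_union_left.mp (hdis t ht) |>.2
        · rcases ht with rfl | ht
          · exact hd
          · exact Finset.disjoint_union_left.mp (hdis t ht) |>.1
      · rintro ⟨⟨hs, hp⟩, hdis, hm⟩
        refine ⟨hp, fun t ht => Finset.disjoint_union_left.mpr ⟨hdis t (Or.inr ht), hs t ht⟩, hm⟩
    · have : (markDFA d).step (some m) s = none := by
        simp [markDFA, hd]
      rw [hstep, this, markDFA_none]
      simp only [List.pairwise_cons, List.mem_cons]
      constructor
      · intro h; exact absurd h (by simp)
      · rintro ⟨_, hdis, _⟩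
        exact absurd (hdis s (Or.inl rfl)) hd

def validLang (d : ℕ) : Language (Finset (Fin d)) := (markDFA d).accepts

theorem isRegular_validLang (d : ℕ) : (validLang d).IsRegular :=
  ⟨Option (Finset (Fin d)), inferInstance, markDFA d, rfl⟩

theorem mem_validLang_iff (z : List (Finset (Fin d))) :
    z ∈ validLang d ↔ ∃ p : Fin d → Fin z.length, Marking z p := by
  have : z ∈ validLang d ↔ (markDFA d).evalFrom (some ∅) z = some Finset.univ := Iff.rfl
  rw [this, markDFA_some]
  constructor
  · rintro ⟨hp, -, huniv⟩
    have hex : ∀ j : Fin d, ∃ q : Fin z.length, j ∈ z.get q := by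
      intro j
      have : j ∈ z.foldl (· ∪ ·) ∅ := huniv ▸ Finset.mem_univ j
      rcases (foldl_union_mem z ∅ j).mp this with h | ⟨s, hs, hj⟩
      · simp at h
      · obtain ⟨q, hq⟩ := List.mem_iff_get.mp hs
        exact ⟨q, hq ▸ hj⟩
    choose p hp' using hex
    refine ⟨p, fun j q => ⟨fun hj => ?_, fun h => h ▸ hp' j⟩⟩
    by_contra hne
    have hdis : Disjoint (z.get q) (z.get (p j)) ∨ Disjoint (z.get (p j)) (z.get q) := by
      rcases lt_or_gt_of_ne (fun h => hne (Fin.ext (by exact_mod_cast congrArg Fin.val h))) with h | h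
      · exact Or.inl (List.pairwise_iff_get.mp hp q (p j) h)
      · exact Or.inr (List.pairwise_iff_get.mp hp (p j) q h)
    rcases hdis with h | h
    · exact (Finset.disjoint_left.mp h hj) (hp' j)
    · exact (Finset.disjoint_left.mp h (hp' j)) hj
  · rintro ⟨p, hp⟩
    refine ⟨List.pairwise_iff_get.mpr fun q q' hlt => ?_, fun s _ => Finset.disjoint_empty_left s,
      ?_⟩
    · rw [Finset.disjoint_left]
      intro j hj hj'
      have h1 := (hp j q).mp hj
      have h2 := (hp j q').mp hj'
      rw [h1, h2] at hlt
      exact lt_irrefl _ hlt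
    · symm
      apply Finset.eq_univ_of_forall
      intro j
      rw [foldl_union_mem]
      exact Or.inr ⟨z.get (p j), List.get_mem _ _, (hp j (p j)).mpr rfl⟩




section S4
variable {A : Type} [Fintype A] {d : ℕ}

/-- the `d`-sample closure of `K` (within each length). -/
def SCl (d : ℕ) (K : Set (List A)) : Set (List A) :=
  {w | ∀ i : Fin d → Fin w.length, ∃ x ∈ K, x.length = w.length ∧
    ∀ j, x[((i j : ℕ))]? = w[((i j : ℕ))]?}

/-- canonical numerical predicate of `K` -/
def canonN (K : Set (List A)) (d : ℕ) (a : Fin d → A) (p : Fin d → ℕ) (n : ℕ) : Prop :=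
  ∃ x ∈ K, x.length = n ∧ ∀ j, x[p j]? = some (a j)

theorem mem_SCl_iff_canonN (K : Set (List A)) (w : List A) :
    w ∈ SCl d K ↔ ∀ i : Fin d → Fin w.length,
      canonN K d (fun j => w.get (i j)) (fun j => ((i j : ℕ))) w.length := by
  unfold SCl canonN
  simp only [Set.mem_setOf_eq]
  refine forall_congr' fun i => exists_congr fun x => and_congr_right fun _ =>
    and_congr_right fun _ => forall_congr' fun j => ?_
  rw [List.getElem?_eq_getElem (i j).isLt, List.get_eq_getElem]

theorem length_eq_of_map {α β : Type*} {z : List α} {f : α → β} {u : List β}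
    (h : List.map f z = u) : z.length = u.length := by rw [← h, List.length_map]

end S4


section ENC
variable {A : Type} [Fintype A] {d : ℕ}

theorem marking_iff_encoding_shape (u : List (Finset (Fin d))) (p : Fin d → Fin u.length) :
    (∀ (j : Fin d) (q : Fin u.length), j ∈ u.get q ↔ q = p j) ↔ Marking u p := Iff.rfl

theorem enc_canonN_regular {K : Set (List A)} (hK : Language.IsRegular (K : Language A))
    (a : Fin d → A) : IsRegularNumPred (canonN K d a) := by
  classical
  -- the witness language over the product alphabet
  let Qa : A × Finset (Fin d) → Prop := fun c => ∀ j ∈ c.2, c.1 = a j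
  let Z : Set (List (A × Finset (Fin d))) :=
    (allLang Qa ∩ (List.map Prod.fst ⁻¹' K) : Set _) ∩ (List.map Prod.snd ⁻¹' validLang d)
  have hZ : Language.IsRegular (Z : Language (A × Finset (Fin d))) :=
    isRegular_inter (isRegular_inter (isRegular_allLang Qa) (isRegular_preimage _ hK))
      (isRegular_preimage _ (isRegular_validLang d))
  have himg : Language.IsRegular ({u | ∃ z ∈ Z, List.map Prod.snd z = u} :
      Language (Finset (Fin d))) := isRegular_image Prod.snd hZ
  have heq : NumPredEncoding (canonN K d a)
      = {u | ∃ z ∈ Z, List.map Prod.snd z = u} := by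
    ext u
    constructor
    · rintro ⟨p, hmark, x, hxK, hxlen, hxj⟩
      refine ⟨x.zip u, ⟨⟨?_, ?_⟩, ?_⟩, ?_⟩
      · -- allLang Qa
        intro c hc
        obtain ⟨q, hq⟩ := List.mem_iff_get.mp hc
        intro j hj
        have hql : (q : ℕ) < u.length := by
          have := q.isLt
          simpa [List.length_zip, hxlen] using this
        have hcz : c = (x[(q : ℕ)]'(by omega), u[(q : ℕ)]'hql) := by
          rw [← hq, List.get_eq_getElem, List.getElem_zip]
        have hju : j ∈ u.get ⟨q, hql⟩ := by
          rw [List.get_eq_getElem]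
          have := congrArg Prod.snd hcz
          simp only at this
          rw [← this]; exact hj
        have hqp : (⟨q, hql⟩ : Fin u.length) = p j := (hmark j ⟨q, hql⟩).mp hju
        have hx1 : c.1 = x[(q : ℕ)]'(by omega) := by rw [hcz]
        have hxq : x[((p j : ℕ))]? = some (c.1) := by
          rw [← hqp]
          simp only [hx1]
          exact List.getElem?_eq_getElem _
        rw [hxj j] at hxq
        exact Option.some_injective _ hxq.symm
      · -- fst projection in K
        show List.map Prod.fst (x.zip u) ∈ K
        rw [List.map_fst_zip (le_of_eq hxlen)]
        exact hxK
      · -- snd projection valid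
        show List.map Prod.snd (x.zip u) ∈ validLang d
        rw [List.map_snd_zip (ge_of_eq hxlen)]
        exact (mem_validLang_iff u).mpr ⟨p, hmark⟩
      · rw [List.map_snd_zip (ge_of_eq hxlen)]
    · rintro ⟨z, ⟨⟨hQ, hfst⟩, hsnd⟩, hzu⟩
      subst hzu
      change List.map Prod.snd z ∈ validLang d at hsnd
      obtain ⟨p, hmark⟩ := (mem_validLang_iff _).mp hsnd
      refine ⟨p, hmark, List.map Prod.fst z, hfst, by simp, ?_⟩
      intro j
      have hpl : ((p j : ℕ)) < z.length := by simpa using (p j).isLt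
      have hju : j ∈ (List.map Prod.snd z).get (p j) := (hmark j (p j)).mpr rfl
      have hsnd' : (List.map Prod.snd z).get (p j) = (z[(p j : ℕ)]'hpl).2 := by
        rw [List.get_eq_getElem, List.getElem_map]
      have hQc := hQ (z[(p j : ℕ)]'hpl) (List.getElem_mem hpl) j (by rw [← hsnd']; exact hju)
      rw [List.getElem?_eq_getElem (show ((p j : ℕ)) < (List.map Prod.fst z).length by simpa using hpl)]
      rw [List.getElem_map, hQc]
  unfold IsRegularNumPred
  rw [heq]
  exact himg

end ENC

section SCLREG
variable {A : Type} [Fintype A] {d : ℕ}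

theorem scl_regular {K : Set (List A)} (hK : Language.IsRegular (K : Language A)) :
    Language.IsRegular (SCl d K : Language A) := by
  classical
  let Q' : (A × Finset (Fin d)) × A → Prop := fun c => c.1.2.Nonempty → c.2 = c.1.1
  let T : Set (List ((A × Finset (Fin d)) × A)) :=
    (allLang Q' ∩ (List.map Prod.snd ⁻¹' K) : Set _)
  let P : Set (List (A × Finset (Fin d))) := {z | ∃ t ∈ T, List.map Prod.fst t = z}
  let R : Set (List (A × Finset (Fin d))) :=
    ((List.map Prod.snd ⁻¹' validLang d) ∩ Pᶜ : Set _)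
  let W : Set (List A) := {w | ∃ z ∈ R, List.map Prod.fst z = w}
  have hP : Language.IsRegular (P : Language (A × Finset (Fin d))) :=
    isRegular_image Prod.fst
      (isRegular_inter (isRegular_allLang Q') (isRegular_preimage _ hK))
  have hW : Language.IsRegular (W : Language A) :=
    isRegular_image Prod.fst
      (isRegular_inter (isRegular_preimage _ (isRegular_validLang d)) (isRegular_compl hP))
  have heq : (SCl d K : Set (List A)) = Wᶜ := by
    ext w
    constructor
    · -- SCl → not W
      intro hw hmem
      obtain ⟨z, ⟨hval, hnP⟩, hzw⟩ := hmem
      subst hzw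
      change List.map Prod.snd z ∈ validLang d at hval
      obtain ⟨p, hmark⟩ := (mem_validLang_iff _).mp hval
      have hlen : (List.map Prod.snd z).length = z.length := by simp
      have hlenf : (List.map Prod.fst z).length = z.length := by simp
      set w := List.map Prod.fst z with hw'
      let i : Fin d → Fin w.length := fun j => ⟨(p j : ℕ), by
        rw [hlenf]; simpa using (p j).isLt⟩
      obtain ⟨x, hxK, hxlen, hxmatch⟩ := hw i
      apply hnP
      refine ⟨z.zip x, ⟨?_, ?_⟩, ?_⟩
      · -- allLang Q'
        intro c hc hne
        obtain ⟨q, hq⟩ := List.mem_iff_get.mp hc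
        have hql : (q : ℕ) < z.length := by
          have := q.isLt
          simp only [List.length_zip] at this
          omega
        have hqx : (q : ℕ) < x.length := by
          have := q.isLt
          simp only [List.length_zip] at this
          omega
        have hcz : c = (z[(q : ℕ)]'hql, x[(q : ℕ)]'hqx) := by
          rw [← hq, List.get_eq_getElem, List.getElem_zip]
        -- the mark at position q is nonempty, get j in it
        obtain ⟨j, hj⟩ := by
          rw [hcz] at hne; exact hne
        have hju : j ∈ (List.map Prod.snd z).get ⟨q, by rw [hlen]; exact hql⟩ := by
          rw [List.get_eq_getElem, List.getElem_map]
          exact hj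
        have hqp := (hmark j _).mp hju
        have hqval : (q : ℕ) = ((p j : ℕ)) := congrArg Fin.val hqp
        -- x matches w at q
        have h1 : x[((i j : ℕ))]? = w[((i j : ℕ))]? := hxmatch j
        have hiv : ((i j : ℕ)) = (q : ℕ) := by simp [i, hqval]
        rw [hiv] at h1
        have hqw : (q : ℕ) < w.length := by rw [hlenf]; exact hql
        rw [List.getElem?_eq_getElem (by rw [hxlen]; exact hqw), List.getElem?_eq_getElem hqw] at h1
        have h2 : x[(q : ℕ)]'(by rw [hxlen]; exact hqw) = w[(q : ℕ)]'hqw :=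
          Option.some_injective _ (by simpa [List.get_eq_getElem] using h1)
        rw [hcz]
        show x[(q : ℕ)]'hqx = (z[(q : ℕ)]'hql).1
        rw [h2]
        simp only [hw', List.getElem_map]
      · -- snd projection in K
        show List.map Prod.snd (z.zip x) ∈ K
        rw [List.map_snd_zip (by rw [hxlen, hlenf])]
        exact hxK
      · rw [List.map_fst_zip (by rw [hxlen, hlenf])]
    · -- not W → SCl
      intro hnw i
      let u : List (Finset (Fin d)) := List.ofFn (fun q : Fin w.length =>
        Finset.univ.filter (fun j => i j = q))
      have hulen : u.length = w.length := by simp [u]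
      have huw : (w.zip u).length = w.length := by simp [List.length_zip, hulen]
      have hfst : List.map Prod.fst (w.zip u) = w := List.map_fst_zip (le_of_eq hulen.symm)
      have hsnd : List.map Prod.snd (w.zip u) = u := List.map_snd_zip (le_of_eq hulen)
      have hmark : ∃ p : Fin d → Fin u.length, Marking u p := by
        refine ⟨fun j => ⟨(i j : ℕ), by rw [hulen]; exact (i j).isLt⟩, ?_⟩
        intro j q
        have hq : (q : ℕ) < w.length := by rw [← hulen]; exact q.isLt
        rw [List.get_eq_getElem]
        show j ∈ u[(q : ℕ)]'q.isLt ↔ _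
        have : u[(q : ℕ)]'q.isLt = Finset.univ.filter (fun j => i j = ⟨q, hq⟩) := by
          simp only [u, List.getElem_ofFn]
        rw [this]
        simp only [Finset.mem_filter, Finset.mem_univ, true_and]
        constructor
        · intro h
          apply Fin.ext
          exact (congrArg Fin.val h).symm
        · intro h
          apply Fin.ext
          exact (congrArg Fin.val h).symm
      have hzP : w.zip u ∈ P := by
        by_contra hnP
        exact hnw ⟨w.zip u, ⟨by show List.map Prod.snd (w.zip u) ∈ validLang d; rw [hsnd]; exact
          (mem_validLang_iff u).mpr hmark, hnP⟩, hfst⟩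
      obtain ⟨t, ⟨hQ, htK⟩, htz⟩ := hzP
      have htlen : t.length = w.length := by
        have := length_eq_of_map htz
        rw [huw] at this
        exact this
      refine ⟨List.map Prod.snd t, htK, by simp [htlen], ?_⟩
      intro j
      have hq : ((i j : ℕ)) < w.length := (i j).isLt
      have hqt : ((i j : ℕ)) < t.length := by rw [htlen]; exact hq
      have hc := hQ (t[((i j : ℕ))]'hqt) (List.getElem_mem hqt)
      have ht1 : (t[((i j : ℕ))]'hqt).1 = (w.zip u)[((i j : ℕ))]'(by rw [huw]; exact hq) := by
        have h3 := List.getElem_of_eq htz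
          (show ((i j : ℕ)) < (List.map Prod.fst t).length by simpa using hqt)
        rw [List.getElem_map] at h3
        exact h3
      have hzq : (w.zip u)[((i j : ℕ))]'(by rw [huw]; exact hq)
          = (w[((i j : ℕ))]'hq, u[((i j : ℕ))]'(by rw [hulen]; exact hq)) := List.getElem_zip
      have hju : j ∈ u[((i j : ℕ))]'(by rw [hulen]; exact hq) := by
        have : u[((i j : ℕ))]'(by rw [hulen]; exact hq)
            = Finset.univ.filter (fun j' => i j' = ⟨(i j : ℕ), hq⟩) := by
          simp only [u, List.getElem_ofFn]
        rw [this]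
        simp only [Finset.mem_filter, Finset.mem_univ, true_and]

      have hne : (t[((i j : ℕ))]'hqt).1.2.Nonempty := by
        rw [ht1, hzq]
        exact ⟨j, hju⟩
      have heq2 := hc hne
      rw [ht1, hzq] at heq2
      -- heq2 : (t[i j]).2 = w[i j]
      rw [List.getElem?_eq_getElem (show ((i j : ℕ)) < (List.map Prod.snd t).length by
        simpa using hqt), List.getElem?_eq_getElem hq]
      simp only [List.get_eq_getElem, List.getElem_map]
      rw [heq2]
  rw [show (SCl d K : Language A) = (SCl d K : Set (List A)) from rfl, heq]
  exact isRegular_compl hW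

end SCLREG

section S5
variable {A : Type} [Fintype A] {d e : ℕ}

theorem subset_SCl (K : Set (List A)) : K ⊆ SCl d K := by
  intro w hw i
  exact ⟨w, hw, rfl, fun j => rfl⟩

theorem SCl_mono {K K' : Set (List A)} (h : K ⊆ K') : SCl d K ⊆ SCl d K' := by
  intro w hw i
  obtain ⟨x, hx, hl, hm⟩ := hw i
  exact ⟨x, h hx, hl, hm⟩

theorem SCl_anti {K : Set (List A)} (hd : 1 ≤ d) (hde : d ≤ e) : SCl e K ⊆ SCl d K := by
  intro w hw i
  let i' : Fin e → Fin w.length := fun j =>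
    i (if h : (j : ℕ) < d then ⟨(j : ℕ), h⟩ else ⟨0, hd⟩)
  obtain ⟨x, hx, hl, hm⟩ := hw i'
  refine ⟨x, hx, hl, fun j => ?_⟩
  have key : i' (Fin.castLE hde j) = i j := by
    have hlt : ((Fin.castLE hde j : Fin e) : ℕ) < d := j.isLt
    simp only [i', dif_pos hlt]
    congr 1
  have := hm (Fin.castLE hde j)
  rw [key] at this
  exact this

theorem nil_mem_SCl (K : Set (List A)) (hd : 1 ≤ d) : ([] : List A) ∈ SCl d K := by
  intro i
  exact absurd (i ⟨0, hd⟩).isLt (by simp)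

theorem SCl_subset_nil {K : Set (List A)} (hd : 1 ≤ d) (h : K ⊆ {[]}) :
    SCl d K ⊆ {([] : List A)} := by
  intro w hw
  by_contra hne
  have hpos : 0 < w.length := by
    cases w with
    | nil => exact absurd rfl hne
    | cons a t => simp
  obtain ⟨x, hx, hl, -⟩ := hw (fun _ => ⟨0, hpos⟩)
  have hx' : x = [] := h hx
  rw [hx'] at hl
  simp at hl
  omega

theorem SCl_idem {K : Set (List A)} : SCl d (SCl d K) ⊆ SCl d K := by
  intro w hw i
  obtain ⟨x, hx, hl, hm⟩ := hw i
  obtain ⟨y, hy, hl', hm'⟩ := hx (fun j => ⟨(i j : ℕ), by rw [hl]; exact (i j).isLt⟩)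
  refine ⟨y, hy, hl'.trans hl, fun j => ?_⟩
  exact (hm' j).trans (hm j)

theorem SCl_union_split {X Y : Set (List A)} :
    SCl (d + e) (X ∪ Y) ⊆ SCl d X ∪ SCl e Y := by
  intro w hw
  by_contra hn
  rw [Set.mem_union, not_or] at hn
  obtain ⟨hnX, hnY⟩ := hn
  simp only [SCl, Set.mem_setOf_eq, not_forall] at hnX hnY
  obtain ⟨i₁, hb₁⟩ := hnX
  obtain ⟨i₂, hb₂⟩ := hnY
  push_neg at hb₁ hb₂
  obtain ⟨x, hx, hl, hm⟩ := hw (Fin.addCases i₁ i₂)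
  rcases hx with hx | hx
  · obtain ⟨j, hj⟩ := hb₁ x hx hl
    have := hm (Fin.castAdd e j)
    rw [Fin.addCases_left] at this
    exact hj this
  · obtain ⟨j, hj⟩ := hb₂ x hx hl
    have := hm (Fin.natAdd d j)
    rw [Fin.addCases_right] at this
    exact hj this

def unionFst (l : List (Set (List A) × Set (List A))) : Set (List A) :=
  l.foldr (fun p s => p.1 ∪ s) ∅

def unionSnd (l : List (Set (List A) × Set (List A))) : Set (List A) :=
  l.foldr (fun p s => p.2 ∪ s) ∅

theorem mem_unionFst {l : List (Set (List A) × Set (List A))} {w : List A} :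
    w ∈ unionFst l ↔ ∃ p ∈ l, w ∈ p.1 := by
  induction l with
  | nil => simp [unionFst]
  | cons p t ih => simp [unionFst, List.foldr_cons, Set.mem_union] at ih ⊢; rw [ih]

theorem mem_unionSnd {l : List (Set (List A) × Set (List A))} {w : List A} :
    w ∈ unionSnd l ↔ ∃ p ∈ l, w ∈ p.2 := by
  induction l with
  | nil => simp [unionSnd]
  | cons p t ih => simp [unionSnd, List.foldr_cons, Set.mem_union] at ih ⊢; rw [ih]

theorem scl_cover {δ : ℕ} (hδ : 1 ≤ δ) (l : List (Set (List A) × Set (List A)))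
    (hl : ∀ p ∈ l, SCl δ p.1 ⊆ p.2) (X : Set (List A)) (hX : X ⊆ unionFst l) :
    SCl (δ * l.length + 1) X ⊆ unionSnd l ∪ {([] : List A)} := by
  induction l generalizing X with
  | nil =>
    intro w hw
    right
    have hX' : X ⊆ {([] : List A)} := by
      intro x hx
      exact absurd (hX hx) (by simp [unionFst])
    exact SCl_subset_nil (le_refl 1) hX' (by simpa using hw)
  | cons p t ih =>
    have harity : δ * (p :: t).length + 1 = δ + (δ * t.length + 1) := by
      simp [List.length_cons]; ring
    intro w hw
    rw [harity] at hw
    have hw' : w ∈ SCl (δ + (δ * t.length + 1)) (p.1 ∪ unionFst t) :=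
      SCl_mono (by intro y hy; exact hX hy) hw
    rcases SCl_union_split hw' with h | h
    · exact Or.inl (by rw [unionSnd]; exact Or.inl (hl p (List.mem_cons_self) h))
    · rcases ih (fun q hq => hl q (List.mem_cons_of_mem p hq)) (unionFst t) (fun y hy => hy) h
        with h' | h'
      · exact Or.inl (by rw [unionSnd]; exact Or.inr h')
      · exact Or.inr h'

end S5

section S6
variable {A : Type} [Fintype A]

def SClosed (X : Set (List A)) : Prop := ∃ d, 1 ≤ d ∧ SCl d X ⊆ X

theorem SClosed_univ : SClosed (Set.univ : Set (List A)) :=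
  ⟨1, le_rfl, fun _ _ => trivial⟩

theorem SClosed_nil : SClosed ({[]} : Set (List A)) :=
  ⟨1, le_rfl, SCl_subset_nil le_rfl (fun _ h => h)⟩

theorem SClosed_inter {X Y : Set (List A)} (hX : SClosed X) (hY : SClosed Y) :
    SClosed (X ∩ Y) := by
  obtain ⟨d₁, hd₁, h₁⟩ := hX
  obtain ⟨d₂, hd₂, h₂⟩ := hY
  refine ⟨d₁ + d₂, by omega, fun w hw => ?_⟩
  constructor
  · exact h₁ (SCl_anti hd₁ (by omega) (SCl_mono Set.inter_subset_left hw))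
  · exact h₂ (SCl_anti hd₂ (by omega) (SCl_mono Set.inter_subset_right hw))

theorem SClosed_union {X Y : Set (List A)} (hX : SClosed X) (hY : SClosed Y) :
    SClosed (X ∪ Y) := by
  obtain ⟨d₁, hd₁, h₁⟩ := hX
  obtain ⟨d₂, hd₂, h₂⟩ := hY
  refine ⟨d₁ + d₂, by omega, fun w hw => ?_⟩
  rcases SCl_union_split hw with h | h
  · exact Or.inl (h₁ h)
  · exact Or.inr (h₂ h)

theorem pi1_SClosed {d : ℕ} {M : Set (List A)} (hd : 1 ≤ d) (hdef : Pi1NDefinable A d M) :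
    SCl d M ⊆ M := by
  obtain ⟨N, hN⟩ := hdef
  intro w hw
  rw [hN]
  intro i
  obtain ⟨x, hxM, hl, hm⟩ := hw i
  let i' : Fin d → Fin x.length := fun j => ⟨(i j : ℕ), by rw [hl]; exact (i j).isLt⟩
  have hx := (hN x).mp hxM i'
  have e2 : (fun j => x.get (i' j)) = fun j => w.get (i j) := by
    funext j
    have := hm j
    rw [List.getElem?_eq_getElem ((i j).isLt),
      List.getElem?_eq_getElem (show ((i j : ℕ)) < x.length by rw [hl]; exact (i j).isLt)] at this
    exact Option.some_injective _ this
  have e1 : (fun j => ((i' j : ℕ))) = fun j => ((i j : ℕ)) := rfl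
  rw [e1, e2, hl] at hx
  exact hx

def langOf (l : List (Set (List A) × Set (List A))) : Set (List A) :=
  l.foldr (fun p s => (p.1 \ p.2) ∪ s) ∅

theorem mem_langOf {l : List (Set (List A) × Set (List A))} {w : List A} :
    w ∈ langOf l ↔ ∃ p ∈ l, w ∈ p.1 ∧ w ∉ p.2 := by
  induction l with
  | nil => simp [langOf]
  | cons p t ih =>
    simp only [langOf, List.foldr_cons, Set.mem_union, Set.mem_diff, List.mem_cons] at ih ⊢
    rw [ih]
    constructor
    · rintro (⟨h1, h2⟩ | ⟨q, hq, h⟩)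
      · exact ⟨p, Or.inl rfl, h1, h2⟩
      · exact ⟨q, Or.inr hq, h⟩
    · rintro ⟨q, hq | hq, h⟩
      · exact Or.inl (hq ▸ h)
      · exact Or.inr ⟨q, hq, h⟩

theorem langOf_append {l₁ l₂ : List (Set (List A) × Set (List A))} :
    langOf (l₁ ++ l₂) = langOf l₁ ∪ langOf l₂ := by
  ext w
  simp only [mem_langOf, List.mem_append, Set.mem_union]
  constructor
  · rintro ⟨p, hp | hp, h⟩
    · exact Or.inl ⟨p, hp, h⟩
    · exact Or.inr ⟨p, hp, h⟩
  · rintro (⟨p, hp, h⟩ | ⟨p, hp, h⟩)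
    · exact ⟨p, Or.inl hp, h⟩
    · exact ⟨p, Or.inr hp, h⟩

def NF (S : Set (List A)) : Prop :=
  ∃ l : List (Set (List A) × Set (List A)),
    (∀ p ∈ l, SClosed p.1 ∧ SClosed p.2) ∧ S \ {[]} = langOf l

def complList : List (Set (List A) × Set (List A)) → List (Set (List A) × Set (List A))
  | [] => [(Set.univ, {[]})]
  | p :: t => ((complList t).map fun q => (p.2 ∩ q.1, q.2))
      ++ ((complList t).map fun q => (q.1, q.2 ∪ p.1))

theorem complList_closed {l : List (Set (List A) × Set (List A))}
    (h : ∀ p ∈ l, SClosed p.1 ∧ SClosed p.2) :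
    ∀ q ∈ complList l, SClosed q.1 ∧ SClosed q.2 := by
  induction l with
  | nil =>
    intro q hq
    simp only [complList, List.mem_singleton] at hq
    subst hq
    exact ⟨SClosed_univ, SClosed_nil⟩
  | cons p t ih =>
    intro q hq
    have hp := h p (List.mem_cons_self)
    have ht := fun r hr => h r (List.mem_cons_of_mem p hr)
    simp only [complList, List.mem_append, List.mem_map] at hq
    rcases hq with ⟨r, hr, rfl⟩ | ⟨r, hr, rfl⟩
    · exact ⟨SClosed_inter hp.2 (ih ht r hr).1, (ih ht r hr).2⟩
    · exact ⟨(ih ht r hr).1, SClosed_union (ih ht r hr).2 hp.1⟩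

theorem mem_complList {l : List (Set (List A) × Set (List A))} (w : List A) :
    w ∈ langOf (complList l) ↔ (w ∉ langOf l ∧ w ≠ []) := by
  induction l with
  | nil =>
    rw [mem_langOf]
    constructor
    · rintro ⟨p, hp, -, hout⟩
      have hp' : p = (Set.univ, ({[]} : Set (List A))) := by simpa [complList] using hp
      subst hp'
      refine ⟨by simp [langOf], fun he => hout (by simp [he])⟩
    · rintro ⟨-, hne⟩
      exact ⟨(Set.univ, {[]}), by simp [complList], trivial, by simpa using hne⟩
  | cons p t ih =>
    rw [show complList (p :: t) = ((complList t).map fun q => (p.2 ∩ q.1, q.2))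
      ++ ((complList t).map fun q => (q.1, q.2 ∪ p.1)) from rfl, langOf_append]
    constructor
    · intro h
      rw [Set.mem_union] at h
      rcases h with h | h
      · obtain ⟨q', hq', hin, hout⟩ := mem_langOf.mp h
        obtain ⟨r, hr, rfl⟩ := List.mem_map.mp hq'
        have hmem : w ∈ langOf (complList t) := mem_langOf.mpr ⟨r, hr, hin.2, hout⟩
        obtain ⟨hnt, hne⟩ := ih.mp hmem
        refine ⟨fun hc => ?_, hne⟩
        obtain ⟨s, hs, hsin, hsout⟩ := mem_langOf.mp hc
        rcases List.mem_cons.mp hs with rfl | hs'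
        · exact hsout hin.1
        · exact hnt (mem_langOf.mpr ⟨s, hs', hsin, hsout⟩)
      · obtain ⟨q', hq', hin, hout⟩ := mem_langOf.mp h
        obtain ⟨r, hr, rfl⟩ := List.mem_map.mp hq'
        rw [Set.mem_union, not_or] at hout
        have hmem : w ∈ langOf (complList t) := mem_langOf.mpr ⟨r, hr, hin, hout.1⟩
        obtain ⟨hnt, hne⟩ := ih.mp hmem
        refine ⟨fun hc => ?_, hne⟩
        obtain ⟨s, hs, hsin, hsout⟩ := mem_langOf.mp hc
        rcases List.mem_cons.mp hs with rfl | hs'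
        · exact hout.2 hsin
        · exact hnt (mem_langOf.mpr ⟨s, hs', hsin, hsout⟩)
    · rintro ⟨hnl, hne⟩
      rw [Set.mem_union]
      have hnt : w ∉ langOf t := fun hc => by
        obtain ⟨s, hs, hsin, hsout⟩ := mem_langOf.mp hc
        exact hnl (mem_langOf.mpr ⟨s, List.mem_cons_of_mem p hs, hsin, hsout⟩)
      obtain ⟨q, hq, hin, hout⟩ := mem_langOf.mp (ih.mpr ⟨hnt, hne⟩)
      by_cases hp1 : w ∈ p.1
      · have hp2 : w ∈ p.2 := by
          by_contra hp2
          exact hnl (mem_langOf.mpr ⟨p, List.mem_cons_self, hp1, hp2⟩)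
        exact Or.inl (mem_langOf.mpr ⟨(p.2 ∩ q.1, q.2), List.mem_map.mpr ⟨q, hq, rfl⟩,
          ⟨hp2, hin⟩, hout⟩)
      · refine Or.inr (mem_langOf.mpr ⟨(q.1, q.2 ∪ p.1), List.mem_map.mpr ⟨q, hq, rfl⟩, hin, ?_⟩)
        rw [Set.mem_union, not_or]
        exact ⟨hout, hp1⟩

theorem nf_of_boolcomb {L : Set (List A)}
    (h : BoolComb (fun M => ∃ d : ℕ, 1 ≤ d ∧ Pi1NDefinable A d M) L) : NF L := by
  induction h with
  | base s hs =>
    obtain ⟨d, hd, hdef⟩ := hs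
    refine ⟨[(s, {[]})], ?_, ?_⟩
    · rintro p hp
      simp only [List.mem_singleton] at hp
      subst hp
      exact ⟨⟨d, hd, pi1_SClosed hd hdef⟩, SClosed_nil⟩
    · ext w
      simp [langOf, Set.mem_diff]
  | compl s _ ih =>
    obtain ⟨l, hcl, hrep⟩ := ih
    refine ⟨complList l, complList_closed hcl, ?_⟩
    ext w
    rw [mem_complList]
    constructor
    · rintro ⟨hns, hne⟩
      refine ⟨fun hc => hns ?_, fun he => hne (by simp [he])⟩
      have : w ∈ s \ {[]} := hrep ▸ hc
      exact this.1
    · rintro ⟨hnl, hne⟩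
      refine ⟨fun hs => hnl ?_, by simpa using hne⟩
      rw [← hrep]
      exact ⟨hs, by simpa using hne⟩
  | union s t _ _ ihs iht =>
    obtain ⟨l₁, hcl₁, hrep₁⟩ := ihs
    obtain ⟨l₂, hcl₂, hrep₂⟩ := iht
    refine ⟨l₁ ++ l₂, ?_, ?_⟩
    · intro p hp
      rcases List.mem_append.mp hp with h | h
      · exact hcl₁ p h
      · exact hcl₂ p h
    · rw [langOf_append, ← hrep₁, ← hrep₂, Set.union_diff_distrib]
  | inter s t _ _ ihs iht =>
    obtain ⟨l₁, hcl₁, hrep₁⟩ := ihs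
    obtain ⟨l₂, hcl₂, hrep₂⟩ := iht
    refine ⟨l₁.flatMap fun p => l₂.map fun q => (p.1 ∩ q.1, p.2 ∪ q.2), ?_, ?_⟩
    · intro r hr
      rcases List.mem_flatMap.mp hr with ⟨p, hp, hr'⟩
      rcases List.mem_map.mp hr' with ⟨q, hq, rfl⟩
      exact ⟨SClosed_inter (hcl₁ p hp).1 (hcl₂ q hq).1,
        SClosed_union (hcl₁ p hp).2 (hcl₂ q hq).2⟩
    · ext w
      constructor
      · rintro ⟨⟨hws, hwt⟩, hne⟩
        have h1 : w ∈ langOf l₁ := hrep₁ ▸ (⟨hws, hne⟩ : w ∈ s \ {[]})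
        have h2 : w ∈ langOf l₂ := hrep₂ ▸ (⟨hwt, hne⟩ : w ∈ t \ {[]})
        obtain ⟨p, hp, hin₁, hout₁⟩ := mem_langOf.mp h1
        obtain ⟨q, hq, hin₂, hout₂⟩ := mem_langOf.mp h2
        refine mem_langOf.mpr ⟨(p.1 ∩ q.1, p.2 ∪ q.2),
          List.mem_flatMap.mpr ⟨p, hp, List.mem_map.mpr ⟨q, hq, rfl⟩⟩, ⟨hin₁, hin₂⟩, ?_⟩
        rw [Set.mem_union, not_or]
        exact ⟨hout₁, hout₂⟩
      · intro hw
        obtain ⟨r, hr, hin, hout⟩ := mem_langOf.mp hw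
        rcases List.mem_flatMap.mp hr with ⟨p, hp, hr'⟩
        rcases List.mem_map.mp hr' with ⟨q, hq, rfl⟩
        rw [Set.mem_union, not_or] at hout
        have h1 : w ∈ s \ {[]} := by rw [hrep₁]; exact mem_langOf.mpr ⟨p, hp, hin.1, hout.1⟩
        have h2 : w ∈ t \ {[]} := by rw [hrep₂]; exact mem_langOf.mpr ⟨q, hq, hin.2, hout.2⟩
        exact ⟨⟨h1.1, h2.1⟩, h1.2⟩

end S6

section S7
variable {A : Type} [Fintype A]

theorem exists_uniform_delta (l : List (Set (List A) × Set (List A)))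
    (h : ∀ p ∈ l, SClosed p.1 ∧ SClosed p.2) :
    ∃ δ, 1 ≤ δ ∧ ∀ p ∈ l, SCl δ p.1 ⊆ p.1 ∧ SCl δ p.2 ⊆ p.2 := by
  induction l with
  | nil => exact ⟨1, le_rfl, by simp⟩
  | cons p t ih =>
    obtain ⟨δt, hδt, hht⟩ := ih (fun q hq => h q (List.mem_cons_of_mem p hq))
    obtain ⟨⟨d₁, hd₁, h₁⟩, ⟨d₂, hd₂, h₂⟩⟩ := h p (List.mem_cons_self)
    refine ⟨δt + d₁ + d₂, by omega, ?_⟩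
    intro q hq
    rcases List.mem_cons.mp hq with rfl | hq'
    · exact ⟨fun w hw => h₁ (SCl_anti hd₁ (by omega) hw),
        fun w hw => h₂ (SCl_anti hd₂ (by omega) hw)⟩
    · exact ⟨fun w hw => (hht q hq').1 (SCl_anti hδt (by omega) hw),
        fun w hw => (hht q hq').2 (SCl_anti hδt (by omega) hw)⟩

/-- intersection of the `D` components over an index set -/
def DIn (l : List (Set (List A) × Set (List A))) (I : Finset (Fin l.length)) : Set (List A) :=
  ⋂ i ∈ I, (l.get i).2

theorem DIn_closed {δ : ℕ} {l : List (Set (List A) × Set (List A))}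
    (hcl : ∀ p ∈ l, SCl δ p.1 ⊆ p.1 ∧ SCl δ p.2 ⊆ p.2) (I : Finset (Fin l.length)) :
    SCl δ (DIn l I) ⊆ DIn l I := by
  intro w hw
  apply Set.mem_iInter₂.mpr
  intro i hi
  exact (hcl _ (List.get_mem l _)).2
    (SCl_mono (fun y hy => Set.mem_iInter₂.mp hy i hi) hw)

theorem nil_mem_of_closed {δ : ℕ} {X : Set (List A)} (hδ : 1 ≤ δ) (h : SCl δ X ⊆ X) :
    ([] : List A) ∈ X := h (nil_mem_SCl X hδ)

/-- the derived sequence -/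
def seqK (E : ℕ) (S : Set (List A)) : ℕ → Set (List A)
  | 0 => S
  | m + 1 => if Even m then SCl E (seqK E S m) \ S else SCl E (seqK E S m) ∩ S

def seqA (E : ℕ) (S : Set (List A)) (m : ℕ) : Set (List A) := SCl E (seqK E S m)

theorem seqK_succ_subset (E : ℕ) (S : Set (List A)) (m : ℕ) :
    seqK E S (m + 1) ⊆ seqA E S m := by
  unfold seqK
  split
  · exact Set.diff_subset
  · exact Set.inter_subset_left

theorem seqA_succ_subset (E : ℕ) (S : Set (List A)) (m : ℕ) :
    seqA E S (m + 1) ⊆ seqA E S m :=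
  fun w hw => SCl_idem (SCl_mono (seqK_succ_subset E S m) hw)

theorem seqA_le_subset (E : ℕ) (S : Set (List A)) {m m' : ℕ} (h : m ≤ m') :
    seqA E S m' ⊆ seqA E S m := by
  induction m' with
  | zero => rw [Nat.le_zero.mp h]
  | succ n ih =>
    rcases Nat.lt_or_ge m (n+1) with h' | h'
    · exact fun w hw => ih (by omega) (seqA_succ_subset E S n hw)
    · have : m = n + 1 := by omega
      subst this
      exact fun w hw => hw

theorem seqK_regular {E : ℕ} {S : Set (List A)} (hS : Language.IsRegular (S : Language A))
    (m : ℕ) : Language.IsRegular (seqK E S m : Language A) := by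
  induction m with
  | zero => exact hS
  | succ n ih =>
    unfold seqK
    split
    · have : (SCl E (seqK E S n) \ S : Set (List A)) = (SCl E (seqK E S n) ∩ Sᶜ : Set (List A)) :=
        Set.diff_eq _ _
      rw [this]
      exact isRegular_inter (scl_regular ih) (isRegular_compl hS)
    · exact isRegular_inter (scl_regular ih) hS

theorem pi1reg_of_scl {d : ℕ} {K : Set (List A)} (hK : Language.IsRegular (K : Language A)) :
    Pi1RegDefinable A d (SCl d K) :=
  ⟨canonN K d, fun a => enc_canonN_regular hK a, fun w => mem_SCl_iff_canonN K w⟩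

theorem isRegular_empty {β : Type} : Language.IsRegular ((∅ : Set (List β)) : Language β) := by
  refine ⟨Unit, inferInstance, ⟨fun _ _ => (), (), ∅⟩, ?_⟩
  ext x
  constructor
  · intro h; exact h
  · intro h; exact absurd h (Set.notMem_empty x)

theorem pi1reg_nil : Pi1RegDefinable A 1 ({[]} : Set (List A)) := by
  refine ⟨fun _ _ _ => False, fun a => ?_, fun w => ?_⟩
  · unfold IsRegularNumPred
    have : NumPredEncoding (fun (_ : Fin 1 → ℕ) (_ : ℕ) => False)
        = ((∅ : Set (List (Finset (Fin 1)))) : Language (Finset (Fin 1))) := by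
      ext u
      simp [NumPredEncoding]
    rw [this]
    exact isRegular_empty
  · constructor
    · intro hw i
      have hw' : w = [] := hw
      subst hw'
      exact absurd (i 0).isLt (by simp)
    · intro h
      by_contra hne
      have hpos : 0 < w.length := by
        cases w with
        | nil => exact absurd rfl hne
        | cons a t => simp
      exact h (fun _ => ⟨0, hpos⟩)

theorem boolcomb_congr {α : Type*} {P : Set α → Prop} {X Y : Set α}
    (h : BoolComb P X) (e : X = Y) : BoolComb P Y := e ▸ h

end S7

section S8
variable {A : Type} [Fintype A]

def UU (l : List (Set (List A) × Set (List A))) (c : ℕ) : Set (List A) :=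
  ⋃ I ∈ Finset.powersetCard c (Finset.univ : Finset (Fin l.length)), DIn l I

def VV (l : List (Set (List A) × Set (List A))) (c : ℕ) : Set (List A) :=
  ⋃ I ∈ Finset.powersetCard c (Finset.univ : Finset (Fin l.length)),
    ⋃ j ∈ Finset.univ.filter (fun j => j ∉ I), (DIn l I ∩ (l.get j).1)

theorem mem_UU {l : List (Set (List A) × Set (List A))} {c : ℕ} {w : List A} :
    w ∈ UU l c ↔ ∃ I ∈ Finset.powersetCard c (Finset.univ : Finset (Fin l.length)),
      w ∈ DIn l I := by
  simp [UU]

theorem mem_VV {l : List (Set (List A) × Set (List A))} {c : ℕ} {w : List A} :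
    w ∈ VV l c ↔ ∃ I ∈ Finset.powersetCard c (Finset.univ : Finset (Fin l.length)),
      ∃ j, j ∉ I ∧ w ∈ DIn l I ∩ (l.get j).1 := by
  simp only [VV, Set.mem_iUnion, Finset.mem_filter, Finset.mem_univ, true_and, exists_prop,
    Set.mem_inter_iff]

noncomputable def listE (l : List (Set (List A) × Set (List A))) (S : Set (List A)) (c : ℕ) :
    List (Set (List A) × Set (List A)) :=
  ((Finset.powersetCard c (Finset.univ : Finset (Fin l.length))).toList.flatMap fun I =>
    ((Finset.univ.filter (fun j => j ∉ I)).toList).map fun j =>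
      (DIn l I ∩ ((l.get j).1 \ (l.get j).2), DIn l I ∩ (l.get j).1))
  ++ [(({[]} : Set (List A)) ∩ S, ({[]} : Set (List A)))]

noncomputable def listO (l : List (Set (List A) × Set (List A))) (S : Set (List A)) (c : ℕ) :
    List (Set (List A) × Set (List A)) :=
  ((Finset.powersetCard c (Finset.univ : Finset (Fin l.length))).toList.flatMap fun I =>
    ((Finset.univ.filter (fun j => j ∉ I)).toList).map fun j =>
      ((DIn l I ∩ (l.get j).1) \ S, DIn l (insert j I)))
  ++ [(({[]} : Set (List A)) \ S, ({[]} : Set (List A)))]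

theorem pC_card_le (r c : ℕ) :
    (Finset.powersetCard c (Finset.univ : Finset (Fin r))).card ≤ 2 ^ r := by
  calc (Finset.powersetCard c (Finset.univ : Finset (Fin r))).card
      ≤ (Finset.univ : Finset (Fin r)).powerset.card :=
        Finset.card_le_card (fun I hI =>
          Finset.mem_powerset.mpr (Finset.mem_powersetCard.mp hI).1)
    _ = 2 ^ r := by rw [Finset.card_powerset, Finset.card_univ, Fintype.card_fin]

theorem listE_length_le (l : List (Set (List A) × Set (List A))) (S : Set (List A)) (c : ℕ) :
    (listE l S c).length ≤ 2 ^ l.length * l.length + 1 := by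
  unfold listE
  rw [List.length_append, List.length_flatMap]
  have h1 : ∀ x ∈ (List.map (fun I => List.length <|
      ((Finset.univ.filter (fun j => j ∉ I)).toList).map fun j =>
        (DIn l I ∩ ((l.get j).1 \ (l.get j).2), DIn l I ∩ (l.get j).1))
      (Finset.powersetCard c (Finset.univ : Finset (Fin l.length))).toList), x ≤ l.length := by
    intro x hx
    obtain ⟨I, hI, rfl⟩ := List.mem_map.mp hx
    simp only [Function.comp_apply, List.length_map, Finset.length_toList]
    calc (Finset.univ.filter (fun j => j ∉ I)).card ≤ (Finset.univ : Finset (Fin l.length)).card :=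
          Finset.card_filter_le _ _
      _ = l.length := by rw [Finset.card_univ, Fintype.card_fin]
  have h2 := List.sum_le_card_nsmul _ l.length h1
  rw [List.length_map, Finset.length_toList, smul_eq_mul] at h2
  have h3 := Nat.mul_le_mul_right l.length (pC_card_le l.length c)
  simp only [List.length_singleton]
  omega

theorem listO_length_le (l : List (Set (List A) × Set (List A))) (S : Set (List A)) (c : ℕ) :
    (listO l S c).length ≤ 2 ^ l.length * l.length + 1 := by
  unfold listO
  rw [List.length_append, List.length_flatMap]
  have h1 : ∀ x ∈ (List.map (fun I => List.length <|
      ((Finset.univ.filter (fun j => j ∉ I)).toList).map fun j =>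
        ((DIn l I ∩ (l.get j).1) \ S, DIn l (insert j I)))
      (Finset.powersetCard c (Finset.univ : Finset (Fin l.length))).toList), x ≤ l.length := by
    intro x hx
    obtain ⟨I, hI, rfl⟩ := List.mem_map.mp hx
    simp only [Function.comp_apply, List.length_map, Finset.length_toList]
    calc (Finset.univ.filter (fun j => j ∉ I)).card ≤ (Finset.univ : Finset (Fin l.length)).card :=
          Finset.card_filter_le _ _
      _ = l.length := by rw [Finset.card_univ, Fintype.card_fin]
  have h2 := List.sum_le_card_nsmul _ l.length h1
  rw [List.length_map, Finset.length_toList, smul_eq_mul] at h2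
  have h3 := Nat.mul_le_mul_right l.length (pC_card_le l.length c)
  simp only [List.length_singleton]
  omega

end S8

section S9
variable {A : Type} [Fintype A]
variable (l : List (Set (List A) × Set (List A))) (δ E : ℕ) (S : Set (List A))

theorem even_step (hδ : 1 ≤ δ)
    (hcl : ∀ p ∈ l, SCl δ p.1 ⊆ p.1 ∧ SCl δ p.2 ⊆ p.2)
    (hrep : S \ {[]} = langOf l)
    (hE : δ * (2 ^ l.length * l.length + 1) + 1 ≤ E)
    {c : ℕ} {X : Set (List A)} (hX : X ⊆ UU l c ∪ {[]}) :
    SCl E (X ∩ S) ⊆ VV l c ∪ {([] : List A)} := by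
  have hpieces : ∀ p ∈ listE l S c, SCl δ p.1 ⊆ p.2 := by
    intro p hp
    rcases List.mem_append.mp hp with hp | hp
    · obtain ⟨I, hI, hp'⟩ := List.mem_flatMap.mp hp
      obtain ⟨j, hj, rfl⟩ := List.mem_map.mp hp'
      intro w hw
      exact ⟨DIn_closed hcl I (SCl_mono (fun y hy => hy.1) hw),
        (hcl _ (List.get_mem l _)).1 (SCl_mono (fun y hy => hy.2.1) hw)⟩
    · have hp' : p = (({[]} : Set (List A)) ∩ S, ({[]} : Set (List A))) := by simpa using hp
      subst hp'
      exact SCl_subset_nil hδ Set.inter_subset_left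
  have hcov : X ∩ S ⊆ unionFst (listE l S c) := by
    rintro w ⟨hwX, hwS⟩
    have hlast : (({[]} : Set (List A)) ∩ S, ({[]} : Set (List A))) ∈ listE l S c :=
      List.mem_append.mpr (Or.inr (List.mem_singleton.mpr rfl))
    rcases hX hwX with hU | hε
    · by_cases hwe : w = []
      · exact mem_unionFst.mpr ⟨_, hlast, ⟨hwe, hwS⟩⟩
      · obtain ⟨I, hI, hwD⟩ := mem_UU.mp hU
        have hwl : w ∈ langOf l := by
          rw [← hrep]
          exact ⟨hwS, by simpa using hwe⟩
        obtain ⟨p, hp, hwp1, hwp2⟩ := mem_langOf.mp hwl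
        obtain ⟨j, hj⟩ := List.mem_iff_get.mp hp
        have hjI : j ∉ I := by
          intro hjI
          exact hwp2 (by rw [← hj]; exact Set.mem_iInter₂.mp hwD j hjI)
        refine mem_unionFst.mpr ⟨(DIn l I ∩ ((l.get j).1 \ (l.get j).2), DIn l I ∩ (l.get j).1),
          List.mem_append.mpr (Or.inl (List.mem_flatMap.mpr ⟨I, Finset.mem_toList.mpr hI,
            List.mem_map.mpr ⟨j, Finset.mem_toList.mpr (Finset.mem_filter.mpr
              ⟨Finset.mem_univ _, hjI⟩), rfl⟩⟩)), ⟨hwD, ?_⟩⟩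
        rw [hj]
        exact ⟨hwp1, hwp2⟩
    · exact mem_unionFst.mpr ⟨_, hlast, ⟨hε, hwS⟩⟩
  have hlen := listE_length_le l S c
  have harle : δ * (listE l S c).length + 1 ≤ E :=
    le_trans (Nat.add_le_add_right (Nat.mul_le_mul_left δ hlen) 1) hE
  have h1 : SCl E (X ∩ S) ⊆ SCl (δ * (listE l S c).length + 1) (X ∩ S) :=
    SCl_anti (by omega) harle
  have h2 := scl_cover hδ (listE l S c) hpieces _ hcov
  intro w hw
  rcases h2 (h1 hw) with h | h
  · obtain ⟨p, hp, hwp⟩ := mem_unionSnd.mp h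
    rcases List.mem_append.mp hp with hp | hp
    · obtain ⟨I, hI, hp'⟩ := List.mem_flatMap.mp hp
      obtain ⟨j, hj, rfl⟩ := List.mem_map.mp hp'
      left
      refine mem_VV.mpr ⟨I, Finset.mem_toList.mp hI, j, ?_, hwp⟩
      exact (Finset.mem_filter.mp (Finset.mem_toList.mp hj)).2
    · right
      have hp' : p = (({[]} : Set (List A)) ∩ S, ({[]} : Set (List A))) := by simpa using hp
      subst hp'
      exact hwp
  · exact Or.inr h

theorem odd_step (hδ : 1 ≤ δ)
    (hcl : ∀ p ∈ l, SCl δ p.1 ⊆ p.1 ∧ SCl δ p.2 ⊆ p.2)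
    (hrep : S \ {[]} = langOf l)
    (hE : δ * (2 ^ l.length * l.length + 1) + 1 ≤ E)
    {c : ℕ} {X : Set (List A)} (hX : X ⊆ VV l c ∪ {[]}) :
    SCl E (X \ S) ⊆ UU l (c + 1) ∪ {([] : List A)} := by
  have hpieces : ∀ p ∈ listO l S c, SCl δ p.1 ⊆ p.2 := by
    intro p hp
    rcases List.mem_append.mp hp with hp | hp
    · obtain ⟨I, hI, hp'⟩ := List.mem_flatMap.mp hp
      obtain ⟨j, hj, rfl⟩ := List.mem_map.mp hp'
      have hsub : (DIn l I ∩ (l.get j).1) \ S ⊆ DIn l (insert j I) := by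
        rintro w ⟨⟨hwD, hwC⟩, hwS⟩
        apply Set.mem_iInter₂.mpr
        intro i hi
        rcases Finset.mem_insert.mp hi with rfl | hi'
        · by_cases hwe : w = []
          · subst hwe
            exact nil_mem_of_closed hδ (hcl _ (List.get_mem l _)).2
          · by_contra hwD2
            apply hwS
            have hwl : w ∈ langOf l := mem_langOf.mpr ⟨l.get i, List.get_mem l _, hwC, hwD2⟩
            have : w ∈ S \ {[]} := by rw [hrep]; exact hwl
            exact this.1
        · exact Set.mem_iInter₂.mp hwD i hi'
      exact fun w hw => DIn_closed hcl (insert j I) (SCl_mono hsub hw)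
    · have hp' : p = (({[]} : Set (List A)) \ S, ({[]} : Set (List A))) := by simpa using hp
      subst hp'
      exact SCl_subset_nil hδ Set.diff_subset
  have hcov : X \ S ⊆ unionFst (listO l S c) := by
    rintro w ⟨hwX, hwS⟩
    have hlast : (({[]} : Set (List A)) \ S, ({[]} : Set (List A))) ∈ listO l S c :=
      List.mem_append.mpr (Or.inr (List.mem_singleton.mpr rfl))
    rcases hX hwX with hV | hε
    · obtain ⟨I, hI, j, hjI, hw'⟩ := mem_VV.mp hV
      exact mem_unionFst.mpr ⟨((DIn l I ∩ (l.get j).1) \ S, DIn l (insert j I)),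
        List.mem_append.mpr (Or.inl (List.mem_flatMap.mpr ⟨I, Finset.mem_toList.mpr hI,
          List.mem_map.mpr ⟨j, Finset.mem_toList.mpr (Finset.mem_filter.mpr
            ⟨Finset.mem_univ _, hjI⟩), rfl⟩⟩)), ⟨hw', hwS⟩⟩
    · exact mem_unionFst.mpr ⟨_, hlast, ⟨hε, hwS⟩⟩
  have hlen := listO_length_le l S c
  have harle : δ * (listO l S c).length + 1 ≤ E :=
    le_trans (Nat.add_le_add_right (Nat.mul_le_mul_left δ hlen) 1) hE
  have h1 : SCl E (X \ S) ⊆ SCl (δ * (listO l S c).length + 1) (X \ S) :=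
    SCl_anti (by omega) harle
  have h2 := scl_cover hδ (listO l S c) hpieces _ hcov
  intro w hw
  rcases h2 (h1 hw) with h | h
  · obtain ⟨p, hp, hwp⟩ := mem_unionSnd.mp h
    rcases List.mem_append.mp hp with hp | hp
    · obtain ⟨I, hI, hp'⟩ := List.mem_flatMap.mp hp
      obtain ⟨j, hj, rfl⟩ := List.mem_map.mp hp'
      left
      have hjI : j ∉ I := (Finset.mem_filter.mp (Finset.mem_toList.mp hj)).2
      have hIc : I.card = c := (Finset.mem_powersetCard.mp (Finset.mem_toList.mp hI)).2
      refine mem_UU.mpr ⟨insert j I, Finset.mem_powersetCard.mpr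
        ⟨Finset.subset_univ _, ?_⟩, hwp⟩
      rw [Finset.card_insert_of_notMem hjI, hIc]
    · right
      have hp' : p = (({[]} : Set (List A)) \ S, ({[]} : Set (List A))) := by simpa using hp
      subst hp'
      exact hwp
  · exact Or.inr h

theorem base_cover (hδ : 1 ≤ δ)
    (hcl : ∀ p ∈ l, SCl δ p.1 ⊆ p.1 ∧ SCl δ p.2 ⊆ p.2)
    (hrep : S \ {[]} = langOf l)
    (hE : δ * (2 ^ l.length * l.length + 1) + 1 ≤ E) :
    SCl E S ⊆ VV l 0 ∪ {([] : List A)} := by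
  classical
  let Lb : List (Set (List A) × Set (List A)) :=
    ((List.finRange l.length).map fun j =>
      ((l.get j).1 \ (l.get j).2, DIn l (∅ : Finset (Fin l.length)) ∩ (l.get j).1))
    ++ [(({[]} : Set (List A)), ({[]} : Set (List A)))]
  have hpieces : ∀ p ∈ Lb, SCl δ p.1 ⊆ p.2 := by
    intro p hp
    rcases List.mem_append.mp hp with hp | hp
    · obtain ⟨j, hj, rfl⟩ := List.mem_map.mp hp
      intro w hw
      refine ⟨Set.mem_iInter₂.mpr (fun i hi => absurd hi (Finset.notMem_empty i)), ?_⟩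
      exact (hcl _ (List.get_mem l _)).1 (SCl_mono (fun y hy => hy.1) hw)
    · have hp' : p = (({[]} : Set (List A)), ({[]} : Set (List A))) := by simpa using hp
      subst hp'
      exact SCl_subset_nil hδ (fun y hy => hy)
  have hcov : S ⊆ unionFst Lb := by
    intro w hwS
    have hlast : (({[]} : Set (List A)), ({[]} : Set (List A))) ∈ Lb :=
      List.mem_append.mpr (Or.inr (List.mem_singleton.mpr rfl))
    by_cases hwe : w = []
    · exact mem_unionFst.mpr ⟨_, hlast, hwe⟩
    · have hwl : w ∈ langOf l := by
        rw [← hrep]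
        exact ⟨hwS, by simpa using hwe⟩
      obtain ⟨p, hp, hwp1, hwp2⟩ := mem_langOf.mp hwl
      obtain ⟨j, hj⟩ := List.mem_iff_get.mp hp
      refine mem_unionFst.mpr ⟨((l.get j).1 \ (l.get j).2,
        DIn l (∅ : Finset (Fin l.length)) ∩ (l.get j).1),
        List.mem_append.mpr (Or.inl (List.mem_map.mpr ⟨j, List.mem_finRange j, rfl⟩)), ?_⟩
      rw [hj]
      exact ⟨hwp1, hwp2⟩
  have hlen : Lb.length ≤ 2 ^ l.length * l.length + 1 := by
    have h1 : Lb.length = l.length + 1 := by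
      simp [Lb]
    have h2 : 1 ≤ 2 ^ l.length := Nat.one_le_two_pow
    have h3 : l.length ≤ 2 ^ l.length * l.length := Nat.le_mul_of_pos_left _ (by omega)
    omega
  have harle : δ * Lb.length + 1 ≤ E :=
    le_trans (Nat.add_le_add_right (Nat.mul_le_mul_left δ hlen) 1) hE
  have h1 : SCl E S ⊆ SCl (δ * Lb.length + 1) S := SCl_anti (by omega) harle
  have h2 := scl_cover hδ Lb hpieces _ hcov
  intro w hw
  rcases h2 (h1 hw) with h | h
  · obtain ⟨p, hp, hwp⟩ := mem_unionSnd.mp h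
    rcases List.mem_append.mp hp with hp | hp
    · obtain ⟨j, hj, rfl⟩ := List.mem_map.mp hp
      left
      refine mem_VV.mpr ⟨∅, Finset.mem_powersetCard.mpr
        ⟨Finset.empty_subset _, Finset.card_empty⟩, j, Finset.notMem_empty j, hwp⟩
    · right
      have hp' : p = (({[]} : Set (List A)), ({[]} : Set (List A))) := by simpa using hp
      subst hp'
      exact hwp
  · exact Or.inr h

end S9

section S10
variable {A : Type} [Fintype A]

theorem seqK_odd (E : ℕ) (S : Set (List A)) (j : ℕ) :
    seqK E S (2*j+1) = SCl E (seqK E S (2*j)) \ S := by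
  show (if Even (2*j) then SCl E (seqK E S (2*j)) \ S else SCl E (seqK E S (2*j)) ∩ S) = _
  rw [if_pos ⟨j, by ring⟩]

theorem seqK_even (E : ℕ) (S : Set (List A)) (j : ℕ) :
    seqK E S (2*j+2) = SCl E (seqK E S (2*j+1)) ∩ S := by
  show (if Even (2*j+1) then SCl E (seqK E S (2*j+1)) \ S
    else SCl E (seqK E S (2*j+1)) ∩ S) = _
  rw [if_neg (by rintro ⟨k, hk⟩; omega)]

theorem seqA_step1 (E : ℕ) (S : Set (List A)) (j : ℕ) :
    seqA E S (2*j) \ S ⊆ seqA E S (2*j+1) := by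
  intro w hw
  apply subset_SCl
  rw [seqK_odd]
  exact hw

theorem seqA_step2 (E : ℕ) (S : Set (List A)) (j : ℕ) :
    seqA E S (2*j+1) ∩ S ⊆ seqA E S (2*j+2) := by
  intro w hw
  apply subset_SCl
  rw [seqK_even]
  exact hw

theorem main_nf {L : Set (List A)} (hreg : Language.IsRegular (L : Language A)) (hNF : NF L) :
    BoolComb (fun M => ∃ d : ℕ, 1 ≤ d ∧ Pi1RegDefinable A d M) L := by
  classical
  obtain ⟨l, hcl0, hrep⟩ := hNF
  obtain ⟨δ, hδ, hcl⟩ := exists_uniform_delta l hcl0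
  set r := l.length with hr
  set E := δ * (2 ^ r * r + 1) + 1 with hE
  have hE1 : 1 ≤ E := by omega
  have hEb : δ * (2 ^ r * r + 1) + 1 ≤ E := le_of_eq rfl
  set P : Set (List A) → Prop := fun M => ∃ d : ℕ, 1 ≤ d ∧ Pi1RegDefinable A d M with hPdef
  -- invariant
  have hinv : ∀ m, seqA E L (2*m+1) ⊆ UU l (m+1) ∪ {([] : List A)} := by
    intro m
    induction m with
    | zero =>
      have hbase : seqA E L 0 ⊆ VV l 0 ∪ {([] : List A)} := by
        have h0 : seqA E L 0 = SCl E L := rfl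
        rw [h0]
        exact base_cover l δ E L hδ hcl hrep hEb
      have h1 : seqA E L (2*0+1) = SCl E (seqA E L (2*0) \ L) := by
        show SCl E (seqK E L (2*0+1)) = _
        rw [seqK_odd]
        rfl
      rw [h1]
      exact odd_step l δ E L hδ hcl hrep hEb hbase
    | succ n ih =>
      have h1 : seqA E L (2*n+2) = SCl E (seqA E L (2*n+1) ∩ L) := by
        show SCl E (seqK E L (2*n+2)) = _
        rw [seqK_even]
        rfl
      have h2 : seqA E L (2*n+2) ⊆ VV l (n+1) ∪ {([] : List A)} := by
        rw [h1]
        exact even_step l δ E L hδ hcl hrep hEb ih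
      have h3 : seqA E L (2*(n+1)+1) = SCl E (seqA E L (2*n+2) \ L) := by
        show SCl E (seqK E L (2*(n+1)+1)) = _
        have : 2*(n+1)+1 = 2*(n+1)+1 := rfl
        rw [show 2*(n+1)+1 = 2*(n+1)+1 from rfl]
        rw [seqK_odd E L (n+1)]
        have : 2*(n+1) = 2*n+2 := by ring
        rw [this]
        rfl
      rw [h3]
      have := odd_step l δ E L hδ hcl hrep hEb h2
      exact fun w hw => this hw
  -- termination
  have hterm : seqA E L (2*r+1) ⊆ {([] : List A)} := by
    intro w hw
    rcases hinv r hw with h | h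
    · exfalso
      obtain ⟨I, hI, -⟩ := mem_UU.mp h
      obtain ⟨hIsub, hIcard⟩ := Finset.mem_powersetCard.mp hI
      have := Finset.card_le_card hIsub
      rw [Finset.card_univ, Fintype.card_fin] at this
      omega
    · exact h
  -- boolcomb bases
  have hAbc : ∀ m, BoolComb P (seqA E L m) := fun m =>
    BoolComb.base _ ⟨E, hE1, pi1reg_of_scl (seqK_regular hreg m)⟩
  have hnilBC : BoolComb P ({[]} : Set (List A)) :=
    BoolComb.base _ ⟨1, le_rfl, pi1reg_nil⟩
  -- downward steps
  have hstep : ∀ j, BoolComb P (L ∩ seqA E L (2*j+2)) → BoolComb P (L ∩ seqA E L (2*j)) := by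
    intro j hBC
    have hid : L ∩ seqA E L (2*j) =
        ((seqA E L (2*j) ∩ (seqA E L (2*j+1))ᶜ) ∪ (L ∩ seqA E L (2*j+2))) := by
      ext w
      constructor
      · rintro ⟨hwL, hwA⟩
        by_cases h : w ∈ seqA E L (2*j+1)
        · exact Or.inr ⟨hwL, seqA_step2 E L j ⟨h, hwL⟩⟩
        · exact Or.inl ⟨hwA, h⟩
      · rintro (⟨hwA, hwA1⟩ | ⟨hwL, hwA2⟩)
        · refine ⟨?_, hwA⟩
          by_contra hwnL
          exact hwA1 (seqA_step1 E L j ⟨hwA, hwnL⟩)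
        · exact ⟨hwL, seqA_le_subset E L (by omega) hwA2⟩
    exact boolcomb_congr (BoolComb.union _ _ (BoolComb.inter _ _ (hAbc (2*j))
      (BoolComb.compl _ (hAbc (2*j+1)))) hBC) hid.symm
  -- top
  have htop : BoolComb P (L ∩ seqA E L (2*(r+1))) := by
    have hidt : L ∩ seqA E L (2*(r+1)) = L ∩ {([] : List A)} := by
      ext w
      constructor
      · rintro ⟨hwL, hwA⟩
        exact ⟨hwL, hterm (seqA_le_subset E L (by omega) hwA)⟩
      · rintro ⟨hwL, hw0⟩
        have hwe : w = [] := hw0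
        subst hwe
        exact ⟨hwL, nil_mem_SCl _ hE1⟩
    by_cases h0 : ([] : List A) ∈ L
    · have h1 : L ∩ {([] : List A)} = ({[]} : Set (List A)) := by
        ext w
        exact ⟨fun h => h.2, fun h => ⟨(show w = [] from h) ▸ h0, h⟩⟩
      exact boolcomb_congr hnilBC (hidt.trans h1).symm
    · have h1 : L ∩ {([] : List A)} = (∅ : Set (List A)) := by
        ext w
        simp only [Set.mem_inter_iff, Set.mem_empty_iff_false, iff_false, not_and]
        intro hwL hw0
        exact h0 ((show w = [] from hw0) ▸ hwL)
      have hempty : BoolComb P (∅ : Set (List A)) :=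
        boolcomb_congr (BoolComb.inter _ _ hnilBC (BoolComb.compl _ hnilBC)) (by simp)
      exact boolcomb_congr hempty (hidt.trans h1).symm
  -- descend
  have hdesc : ∀ t, BoolComb P (L ∩ seqA E L (2*(r+1-t))) := by
    intro t
    induction t with
    | zero => exact htop
    | succ n ih =>
      rcases Nat.eq_zero_or_pos (r+1-n) with h | h
      · have he : r+1-(n+1) = r+1-n := by omega
        rw [he]
        exact ih
      · obtain ⟨k, hk⟩ : ∃ k, r+1-n = k+1 := ⟨r-n, by omega⟩
        have h2 : r+1-(n+1) = k := by omega
        rw [h2]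
        apply hstep k
        have h3 : 2*k+2 = 2*(r+1-n) := by omega
        rw [h3]
        exact ih
  have hfin := hdesc (r+1)
  rw [show r+1-(r+1) = 0 by omega] at hfin
  have hLA0 : L ∩ seqA E L (2*0) = L := by
    ext w
    exact ⟨fun h => h.1, fun h => ⟨h, subset_SCl L h⟩⟩
  exact boolcomb_congr hfin hLA0

end S10

theorem bsigma1_regular_collapse (A : Type) [Fintype A] [Nonempty A]
    (L : Set (List A)) (hreg : Language.IsRegular (L : Language A))
    (h : BoolComb (fun M => ∃ d : ℕ, 1 ≤ d ∧ Pi1NDefinable A d M) L) :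
    BoolComb (fun M => ∃ d : ℕ, 1 ≤ d ∧ Pi1RegDefinable A d M) L :=
  main_nf hreg (nf_of_boolcomb h)
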